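/- For any group B and integer p ≥ 2, the commutator width of the wreath product B ≀ C_p satisfies cw(B ≀ C_p) ≤ max(1, cw(B)). -/

import Mathlib

/-- The cyclic shift action of `C_p = ZMod p` on the direct power `B^p`. -/
def cycShift (B : Type*) [Group B] (p : ℕ) :
    Multiplicative (ZMod p) →* MulAut (ZMod p → B) where
  toFun k := MulEquiv.arrowCongr (Equiv.addRight (Multiplicative.toAdd k)) (MulEquiv.refl B)
  map_one' := by
    ext f i
    simp [MulEquiv.arrowCongr]
    rfl
  map_mul' a b := by
    ext f i
    simp only [MulEquiv.arrowCongr, Equiv.coe_addRight, MulEquiv.coe_mk, Equiv.coe_fn_mk,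
      MulEquiv.refl_apply, toAdd_mul, MulAut.mul_apply]
    congr 1
    simp only [Equiv.addRight_symm, Equiv.coe_addRight]
    abel

/-- The permutational wreath product `B ≀ C_p` with `C_p` acting on `p` points by cyclic shift. -/
abbrev Wr (B : Type*) [Group B] (p : ℕ) : Type _ :=
  (ZMod p → B) ⋊[cycShift B p] Multiplicative (ZMod p)

open scoped commutatorElement

@[simp] lemma cycShift_apply {B : Type*} [Group B] {p : ℕ} (k : Multiplicative (ZMod p))
    (f : ZMod p → B) (i : ZMod p) :
    cycShift B p k f i = f (i - Multiplicative.toAdd k) := by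
  simp [cycShift, MulEquiv.arrowCongr, sub_eq_add_neg]

/-- ordered partial products of `f` -/
def Qprod {B : Type*} [Group B] {p : ℕ} (f : ZMod p → B) (j : ℕ) : B :=
  ((List.range j).map fun i => f (i : ZMod p)).prod

lemma Qprod_succ {B : Type*} [Group B] {p : ℕ} (f : ZMod p → B) (j : ℕ) :
    Qprod f (j + 1) = Qprod f j * f (j : ZMod p) := by
  simp [Qprod, List.range_succ]

lemma Qprod_zero {B : Type*} [Group B] {p : ℕ} (f : ZMod p → B) : Qprod f 0 = 1 := rfl

/-- the key lemma: if the cyclic product of `f` is a single commutator, then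
`(f, 1)` is a single commutator in the wreath product. -/
lemma key {B : Type*} [Group B] {p : ℕ} (hp : 2 ≤ p) (f : ZMod p → B) (a b : B)
    (hf : Qprod f p = ⁅a, b⁆) :
    ∃ x y : Wr B p, (⟨f, 1⟩ : Wr B p) = ⁅x, y⁆ := by
  haveI : NeZero p := ⟨by omega⟩
  set u : ZMod p → B := fun i => (Qprod f i.val)⁻¹ * a with hu
  set v : ZMod p → B := fun i => if i.val = p - 1 then b else 1 with hv
  refine ⟨SemidirectProduct.inl u, ⟨v, Multiplicative.ofAdd (-1)⟩, ?_⟩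
  rw [commutatorElement_def]
  ext i
  · simp only [SemidirectProduct.mul_left, SemidirectProduct.inv_left,
      SemidirectProduct.mul_right, SemidirectProduct.inv_right,
      SemidirectProduct.left_inl, SemidirectProduct.right_inl,
      Pi.mul_apply, Pi.inv_apply, cycShift_apply, map_inv, map_mul, mul_one, one_mul,
      toAdd_ofAdd, toAdd_inv, map_one, MulAut.one_apply, inv_one, MulAut.apply_inv_self]
    rw [sub_neg_eq_add]
    obtain ⟨j, hj, rfl⟩ : ∃ j : ℕ, j < p ∧ (j : ZMod p) = i :=
      ⟨i.val, ZMod.val_lt i, ZMod.natCast_rightInverse i⟩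
    rcases eq_or_ne j (p - 1) with hje | hje
    · subst hje
      have h1 : ((p - 1 : ℕ) : ZMod p) + 1 = 0 := by
        have e : ((p - 1 : ℕ) + 1 : ℕ) = p := by omega
        rw [show (1 : ZMod p) = ((1 : ℕ) : ZMod p) by simp, ← Nat.cast_add, e, ZMod.natCast_self]
      have h2 : ((p - 1 : ℕ) : ZMod p).val = p - 1 := ZMod.val_cast_of_lt hj
      have h3 : Qprod f p = Qprod f (p - 1) * f ((p - 1 : ℕ) : ZMod p) := by
        have := Qprod_succ f (p - 1)
        rwa [Nat.sub_add_cancel (by omega)] at this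
      rw [h1, hu, hv]
      simp only [h2, eq_self_iff_true, if_true, ZMod.val_zero, Qprod_zero]
      have : f ((p - 1 : ℕ) : ZMod p) = (Qprod f (p - 1))⁻¹ * ⁅a, b⁆ := by
        rw [← hf, h3]; group
      rw [this, commutatorElement_def]; group
    · have hj1 : j + 1 < p := by omega
      have h1 : ((j : ZMod p)) + 1 = ((j + 1 : ℕ) : ZMod p) := by push_cast; ring
      have h2 : ((j : ZMod p)).val = j := ZMod.val_cast_of_lt hj
      have h3 : (((j + 1 : ℕ) : ZMod p)).val = j + 1 := ZMod.val_cast_of_lt hj1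
      rw [h1, hu, hv]
      simp only [h2, h3, if_neg hje, Qprod_succ]
      group
  · simp
lemma prod_range_eq_univ {B : Type*} [Group B] {p : ℕ} [NeZero p] (g : ZMod p → Abelianization B) :
    ∏ i ∈ Finset.range p, g (i : ZMod p) = ∏ i : ZMod p, g i := by
  refine Finset.prod_nbij' (fun i => (i : ZMod p)) (fun b => b.val) ?_ ?_ ?_ ?_ ?_ <;>
    simp_all [ZMod.val_cast_of_lt, ZMod.val_lt, Nat.mod_eq_of_lt,
      fun x : ZMod p => ZMod.natCast_rightInverse x]

/-- abelianized product of coordinates, as a hom on the base group of the wreath product -/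
def tau (B : Type*) [Group B] (p : ℕ) [NeZero p] : (ZMod p → B) →* Abelianization B where
  toFun f := ∏ i, Abelianization.of (f i)
  map_one' := by simp
  map_mul' f g := by simp [Finset.prod_mul_distrib]

lemma tau_shift {B : Type*} [Group B] {p : ℕ} [NeZero p] (k : Multiplicative (ZMod p))
    (f : ZMod p → B) : tau B p (cycShift B p k f) = tau B p f := by
  show ∏ i, Abelianization.of (cycShift B p k f i) = _
  simp only [cycShift_apply]
  exact Equiv.prod_comp (Equiv.subRight (Multiplicative.toAdd k))
    fun i => Abelianization.of (f i)

/-- the hom from the wreath product to the abelianization of the base -/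
def theta (B : Type*) [Group B] (p : ℕ) [NeZero p] : Wr B p →* Abelianization B :=
  SemidirectProduct.lift (tau B p) 1 (by
    intro g
    ext f
    simp [tau_shift])

lemma of_Qprod {B : Type*} [Group B] {p : ℕ} [NeZero p] (f : ZMod p → B) (j : ℕ) :
    Abelianization.of (Qprod f j) = ∏ i ∈ Finset.range j, Abelianization.of (f (i : ZMod p)) := by
  induction j with
  | zero => simp [Qprod_zero]
  | succ j ih => rw [Qprod_succ, map_mul, ih, Finset.prod_range_succ]

lemma theta_apply {B : Type*} [Group B] {p : ℕ} [NeZero p] (g : Wr B p) :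
    theta B p g = Abelianization.of (Qprod g.left p) := by
  rw [of_Qprod, prod_range_eq_univ (fun i => Abelianization.of (g.left i))]
  show SemidirectProduct.lift _ _ _ g = _
  rw [← SemidirectProduct.inl_left_mul_inr_right g, map_mul,
    SemidirectProduct.lift_inl, SemidirectProduct.lift_inr]
  simp [tau]

/-- `cw(G) ≤ n`: every element of the commutator subgroup of `G` is a product of
at most `n` commutators. -/
def CwLE (G : Type*) [Group G] (n : ℕ) : Prop :=
  ∀ g ∈ commutator G, ∃ l : List (G × G), l.length ≤ n ∧ g = (l.map fun q => ⁅q.1, q.2⁆).prod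

/-- for any group `B` and integer `p ≥ 2`,
`cw(B ≀ C_p) ≤ max 1 (cw B)`. -/
theorem cw_wreath_le (B : Type*) [Group B] (p : ℕ) (hp : 2 ≤ p) (n : ℕ) (hB : CwLE B n) :
    CwLE (Wr B p) (max 1 n) := by
  haveI : NeZero p := ⟨by omega⟩
  intro g hg
  -- the right component is trivial
  have hr : g.right = 1 :=
    Abelianization.commutator_subset_ker (SemidirectProduct.rightHom (φ := cycShift B p)) hg
  have hgl : g = (⟨g.left, 1⟩ : Wr B p) := by
    cases g; cases hr; rfl
  -- the cyclic product lies in the commutator subgroup of B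
  have hQ : Qprod g.left p ∈ commutator B := by
    have h1 : theta B p g = 1 := Abelianization.commutator_subset_ker (theta B p) hg
    rw [theta_apply] at h1
    exact (QuotientGroup.eq_one_iff _).mp h1
  obtain ⟨l, hlen, hprod⟩ := hB _ hQ
  set f := g.left with hf
  match l, hlen, hprod with
  | [], hlen, hprod =>
    have hQ1 : Qprod f p = ⁅(1 : B), (1 : B)⁆ := by simpa using hprod
    obtain ⟨x, y, hxy⟩ := key hp f 1 1 hQ1
    exact ⟨[(x, y)], by simp, by rw [hgl]; simpa using hxy⟩
  | (a, b) :: rest, hlen, hprod =>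
    set c' : B := (rest.map fun q => ⁅q.1, q.2⁆).prod with hc'
    set pt : ZMod p := ((p - 1 : ℕ) : ZMod p) with hpt
    set e : ZMod p → B := Pi.mulSingle pt c' with he
    set h : ZMod p → B := fun i => f i * (e i)⁻¹ with hh
    have hQp : Qprod f p = ⁅a, b⁆ * c' := by simpa using hprod
    -- partial products of h and f agree up to p-1
    have hagree : ∀ j : ℕ, j < p - 1 → h ((j : ZMod p)) = f ((j : ZMod p)) := by
      intro j hj
      have : (j : ZMod p) ≠ pt := by
        intro hEq
        have := congrArg ZMod.val hEq
        rw [ZMod.val_cast_of_lt (by omega), hpt, ZMod.val_cast_of_lt (by omega)] at this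
        omega
      simp [hh, he, Pi.mulSingle_eq_of_ne this]
    have hQeq : ∀ j : ℕ, j ≤ p - 1 → Qprod h j = Qprod f j := by
      intro j hj
      induction j with
      | zero => simp [Qprod_zero]
      | succ k ih =>
        rw [Qprod_succ, Qprod_succ, ih (by omega), hagree k (by omega)]
    have hQh : Qprod h p = ⁅a, b⁆ := by
      have hs := Qprod_succ h (p - 1)
      rw [Nat.sub_add_cancel (by omega)] at hs
      have hs' := Qprod_succ f (p - 1)
      rw [Nat.sub_add_cancel (by omega)] at hs'
      have hpt' : h pt = f pt * c'⁻¹ := by simp [hh, he]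
      rw [hs, hQeq (p - 1) le_rfl, ← hpt, hpt', ← mul_assoc, ← hs', hQp]
      group
    obtain ⟨x, y, hxy⟩ := key hp h a b hQh
    -- the hom B →* Wr B p placing an element at coordinate pt
    set μ : B →* Wr B p :=
      (SemidirectProduct.inl (φ := cycShift B p)).comp
        (MonoidHom.mulSingle (fun _ : ZMod p => B) pt) with hμ
    refine ⟨(x, y) :: rest.map fun q => (μ q.1, μ q.2), ?_, ?_⟩
    · simp only [List.length_cons, List.length_map]
      have : rest.length + 1 ≤ n := by simpa using hlen
      omega
    · have hsplit : g = ⁅x, y⁆ * SemidirectProduct.inl e := by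
        rw [hgl, ← hxy]
        ext i
        · simp [hh]
        · simp
      have hinl : (SemidirectProduct.inl e : Wr B p)
          = ((rest.map fun q => (μ q.1, μ q.2)).map fun q => ⁅q.1, q.2⁆).prod := by
        have : (SemidirectProduct.inl e : Wr B p) = μ c' := rfl
        rw [this, hc', map_list_prod]
        rw [List.map_map, List.map_map]
        congr 1
        ext q
        simp [Function.comp, map_commutatorElement]
      rw [List.map_cons, List.prod_cons, hsplit, hinl]
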